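/- Let a ∈ [-1,1] and c₁, c₂, c₃ ∈ R with c₁² + c₂² + c₃² = 1. Then √(1-c₁²)·√(1 - 2a√(1-a²)c₁c₂ - a²c₁² - (1-a²)c₂²) ≥ a(c₁² - 1) + √(1-a²)c₁c₂. -/
import Mathlib

lemma cs_aux (x y p q : ℝ) :
    x * p + y * q ≤ Real.sqrt (x ^ 2 + y ^ 2) * Real.sqrt (p ^ 2 + q ^ 2) := by
  rw [← Real.sqrt_mul (by positivity)]
  calc x * p + y * q ≤ |x * p + y * q| := le_abs_self _
    _ = Real.sqrt ((x * p + y * q) ^ 2) := (Real.sqrt_sq_eq_abs _).symm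
    _ ≤ _ := Real.sqrt_le_sqrt (by nlinarith [sq_nonneg (x * q - y * p)])

/-- Key algebraic inequality in the proof of the angle triangle inequality. -/
theorem key_algebraic_inequality
    (a c₁ c₂ c₃ : ℝ) (ha : a ∈ Set.Icc (-1 : ℝ) 1)
    (hc : c₁ ^ 2 + c₂ ^ 2 + c₃ ^ 2 = 1) :
    a * (c₁ ^ 2 - 1) + Real.sqrt (1 - a ^ 2) * c₁ * c₂ ≤
      Real.sqrt (1 - c₁ ^ 2) *
        Real.sqrt (1 - 2 * a * Real.sqrt (1 - a ^ 2) * c₁ * c₂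
          - a ^ 2 * c₁ ^ 2 - (1 - a ^ 2) * c₂ ^ 2) := by
  obtain ⟨ha1, ha2⟩ := ha
  have ha' : a ^ 2 ≤ 1 := by nlinarith
  set b := Real.sqrt (1 - a ^ 2) with hbdef
  have hb2 : b ^ 2 = 1 - a ^ 2 := Real.sq_sqrt (by linarith)
  calc a * (c₁ ^ 2 - 1) + b * c₁ * c₂
      = c₂ * (b * c₁ - a * c₂) + c₃ * (-a * c₃) := by linear_combination a * hc
    _ ≤ Real.sqrt (c₂ ^ 2 + c₃ ^ 2) *
        Real.sqrt ((b * c₁ - a * c₂) ^ 2 + (-a * c₃) ^ 2) := cs_aux _ _ _ _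
    _ ≤ Real.sqrt (c₂ ^ 2 + c₃ ^ 2) *
        Real.sqrt ((b * c₁ - a * c₂) ^ 2 + c₃ ^ 2) := by
        apply mul_le_mul_of_nonneg_left _ (Real.sqrt_nonneg _)
        apply Real.sqrt_le_sqrt
        nlinarith [sq_nonneg c₃]
    _ = Real.sqrt (1 - c₁ ^ 2) *
        Real.sqrt (1 - 2 * a * b * c₁ * c₂ - a ^ 2 * c₁ ^ 2 - (1 - a ^ 2) * c₂ ^ 2) := by
        congr 1
        · congr 1; linarith
        · congr 1; linear_combination c₁ ^ 2 * hb2 + hc
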